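/- Suppose that C is not a product of d linear forms over the algebraic closure of F_q (equivalently, it is not the case that exactly one of η(e0), η(e1), η(e2) is -1 with the other two e's zero). Then a nonzero linear form ℓ ∈ F_q[X0,X1,X2] divides C if and only if there is a choice of indices {i, j, k} = {0, 1, 2} with η(-e_i·e_j) = -1 and η(e_k) = -1 such that ℓ is a nonzero scalar multiple of e_i·X_i + e_j·X_j. -/

import Mathlib

open MvPolynomial

section Helpers

variable {F : Type} [Field F] [Fintype F] {d : ℕ}

lemma deg3 (m : Fin 3 →₀ ℕ) : m.degree = m 0 + m 1 + m 2 := by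
  rw [Finsupp.degree_eq_sum]
  exact Fin.sum_univ_three m

lemma lin_decomp (f : MvPolynomial (Fin 3) F) (hf : f.IsHomogeneous 1) :
    f = MvPolynomial.C (coeff (Finsupp.single 0 1) f) * X 0 +
      MvPolynomial.C (coeff (Finsupp.single 1 1) f) * X 1 +
      MvPolynomial.C (coeff (Finsupp.single 2 1) f) * X 2 := by
  ext m
  simp only [coeff_add, coeff_C_mul, coeff_X']
  by_cases h0 : m = Finsupp.single 0 1
  · subst h0; simp [Finsupp.single_eq_single_iff]
  by_cases h1 : m = Finsupp.single 1 1
  · subst h1; simp [Finsupp.single_eq_single_iff]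
  by_cases h2 : m = Finsupp.single 2 1
  · subst h2; simp [Finsupp.single_eq_single_iff]
  rw [if_neg (fun hh => h0 hh.symm), if_neg (fun hh => h1 hh.symm),
    if_neg (fun hh => h2 hh.symm)]
  simp only [mul_zero, add_zero]
  by_contra hne
  have hdeg : m.degree = 1 := by rw [Finsupp.degree_eq_weight_one]; exact hf hne
  rw [deg3] at hdeg
  have : m = Finsupp.single 0 1 ∨ m = Finsupp.single 1 1 ∨ m = Finsupp.single 2 1 := by
    have hm0 : m 0 = 1 ∧ m 1 = 0 ∧ m 2 = 0 ∨ m 0 = 0 ∧ m 1 = 1 ∧ m 2 = 0 ∨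
        m 0 = 0 ∧ m 1 = 0 ∧ m 2 = 1 := by omega
    rcases hm0 with ⟨a,b,c⟩|⟨a,b,c⟩|⟨a,b,c⟩
    · left; ext x; fin_cases x <;> simp [Finsupp.single_apply, a, b, c]
    · right; left; ext x; fin_cases x <;> simp [Finsupp.single_apply, a, b, c]
    · right; right; ext x; fin_cases x <;> simp [Finsupp.single_apply, a, b, c]
  tauto

lemma two_d_pow (hcardF : Fintype.card F = 2*d+1) {u : F} (hu : u ≠ 0) : u ^ (2*d) = 1 := by
  have := FiniteField.pow_card_sub_one_eq_one u hu
  rwa [hcardF, Nat.add_sub_cancel] at this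

lemma trich (hcardF : Fintype.card F = 2*d+1) (u : F) : u^d = 0 ∨ u^d = 1 ∨ u^d = -1 := by
  by_cases hu : u = 0
  · subst hu
    rcases Nat.eq_zero_or_pos d with h | h
    · subst h
      rw [Nat.mul_zero, Nat.zero_add] at hcardF
      have := Fintype.one_lt_card (α := F)
      omega
    · left; exact zero_pow (by omega)
  · right
    have h1 : (u^d)*(u^d) = 1 := by
      rw [← pow_add] at *; rw [show d + d = 2*d by ring]; exact two_d_pow hcardF hu
    rcases mul_self_eq_one_iff.mp h1 with h | h
    · left; exact h
    · right; exact h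

lemma sq_trick (hcardF : Fintype.card F = 2*d+1) (x y : F) (hy : y ≠ 0) :
    (-(x/y))^d = (-(x*y))^d := by
  have h : -(x*y) = -(x/y) * y^2 := by field_simp
  rw [h, mul_pow, ← pow_mul, two_d_pow hcardF hy, mul_one]

lemma solve_one (h2 : (2:F) ≠ 0) (h3 : (3:F) ≠ 0) {x y : F}
    (hx : x = 0 ∨ x = 1 ∨ x = -1) (hy : y = 0 ∨ y = 1 ∨ y = -1) (h : 1 + x + y = 0) :
    (x = 0 ∧ y = -1) ∨ (x = -1 ∧ y = 0) := by
  rcases hx with rfl|rfl|rfl <;> rcases hy with rfl|rfl|rfl <;>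
    first
      | (left; exact ⟨rfl, rfl⟩)
      | (right; exact ⟨rfl, rfl⟩)
      | (exact absurd (by linear_combination h) one_ne_zero)
      | (exact absurd (by linear_combination h) h2)
      | (exact absurd (by linear_combination h) h3)
      | (exact absurd (by linear_combination -h) one_ne_zero)
      | (exact absurd (by linear_combination -h) h2)
      | (exact absurd (by linear_combination -h) h3)

lemma no_neg_two (h2 : (2:F) ≠ 0) (h3 : (3:F) ≠ 0)
    (hcardF : Fintype.card F = 2*d+1) (u : F) (h : u^d = -2) : False := by
  rcases trich hcardF u with hh|hh|hh <;> rw [hh] at h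
  · exact h2 (by linear_combination h)
  · exact h3 (by linear_combination h)
  · exact one_ne_zero (α := F) (by linear_combination h)

lemma char23 (p h : ℕ) (hp : Nat.Prime p) (hp3 : 3 < p) (hcard : Fintype.card F = p ^ h) :
    (2:F) ≠ 0 ∧ (3:F) ≠ 0 := by
  have hr : CharP F (ringChar F) := ringChar.charP F
  have hprime : (ringChar F).Prime := CharP.char_is_prime F (ringChar F)
  have hc : ((p^h : ℕ) : F) = 0 := by rw [← hcard]; exact Nat.cast_card_eq_zero F
  have hdvd : ringChar F ∣ p^h := (CharP.cast_eq_zero_iff F (ringChar F) _).mp hc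
  have hrp : ringChar F = p :=
    (Nat.prime_dvd_prime_iff_eq hprime hp).mp (hprime.dvd_of_dvd_pow hdvd)
  constructor <;> intro hzero
  · have h2 : ((2:ℕ):F) = 0 := by exact_mod_cast hzero
    have := (CharP.cast_eq_zero_iff F (ringChar F) 2).mp h2
    rw [hrp] at this
    have := Nat.le_of_dvd (by norm_num) this
    omega
  · have h3 : ((3:ℕ):F) = 0 := by exact_mod_cast hzero
    have := (CharP.cast_eq_zero_iff F (ringChar F) 3).mp h3
    rw [hrp] at this
    have := Nat.le_of_dvd (by norm_num) this
    omega

lemma sub_dvd_aeval (j : Fin 3) (g : MvPolynomial (Fin 3) F)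
    (f : MvPolynomial (Fin 3) F) :
    (X j - g) ∣ (f - aeval (Function.update X j g) f) := by
  induction f using MvPolynomial.induction_on with
  | C a => simp
  | add f1 f2 h1 h2 =>
      rw [map_add]
      have : f1 + f2 - (aeval (Function.update X j g) f1 + aeval (Function.update X j g) f2)
          = (f1 - aeval (Function.update X j g) f1) + (f2 - aeval (Function.update X j g) f2) := by
        ring
      rw [this]; exact dvd_add h1 h2
  | mul_X f1 i h1 =>
      rw [map_mul, aeval_X]
      have : f1 * X i - aeval (Function.update X j g) f1 * Function.update X j g i
          = (f1 - aeval (Function.update X j g) f1) * X i +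
            aeval (Function.update X j g) f1 * (X i - Function.update X j g i) := by ring
      rw [this]
      refine dvd_add (Dvd.dvd.mul_right h1 _) ?_
      by_cases hij : i = j
      · subst hij; rw [Function.update_self]; exact Dvd.dvd.mul_left dvd_rfl _
      · rw [Function.update_of_ne hij]; simp

lemma dvd_of_aeval_eq_zero (j : Fin 3) (g f : MvPolynomial (Fin 3) F)
    (h : aeval (Function.update X j g) f = 0) : (X j - g) ∣ f := by
  have := sub_dvd_aeval j g f
  rwa [h, sub_zero] at this

end Helpers

/-- The polynomial `C = X0^d + X1^d + X2^d + (e0·X0 + e1·X1 + e2·X2)^d` over `F_q`. -/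
noncomputable def fermatSlice (F : Type) [Field F] (d : ℕ) (e0 e1 e2 : F) :
    MvPolynomial (Fin 3) F :=
  X 0 ^ d + X 1 ^ d + X 2 ^ d +
    (MvPolynomial.C e0 * X 0 + MvPolynomial.C e1 * X 1 + MvPolynomial.C e2 * X 2) ^ d

section DvdCases

variable {F : Type} [Field F] [Fintype F] {d : ℕ}

lemma dvd_case01 (hcardF : Fintype.card F = 2*d+1) (hd0 : d ≠ 0)
    (e0 e1 e2 t : F) (ht : t ≠ 0) (h01 : (-(e0*e1))^d = -1) (h2 : e2^d = -1) :
    (MvPolynomial.C t * (MvPolynomial.C e0 * X 0 + MvPolynomial.C e1 * X 1)) ∣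
      fermatSlice F d e0 e1 e2 := by
  have he1 : e1 ≠ 0 := by
    rintro rfl
    rw [mul_zero, neg_zero, zero_pow hd0] at h01
    exact one_ne_zero (by linear_combination h01)
  obtain ⟨m, hmdef⟩ : ∃ m : F, m = -(e0/e1) := ⟨_, rfl⟩
  have hm : m ^ d = -1 := by rw [hmdef, sq_trick hcardF _ _ he1]; exact h01
  have hem : e1 * m = -e0 := by rw [hmdef]; field_simp
  have hlf : MvPolynomial.C e0 * X 0 + MvPolynomial.C e1 * X 1
      = MvPolynomial.C e1 * (X 1 - MvPolynomial.C m * X (0 : Fin 3)) := by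
    rw [mul_sub, ← mul_assoc, ← C_mul, hem, map_neg]; ring
  have hgoal : MvPolynomial.C t * (MvPolynomial.C e0 * X 0 + MvPolynomial.C e1 * X 1)
      = MvPolynomial.C (t*e1) * (X 1 - MvPolynomial.C m * X (0 : Fin 3)) := by
    rw [hlf, ← mul_assoc, ← C_mul]
  rw [hgoal]
  have hu : IsUnit (MvPolynomial.C (t*e1) : MvPolynomial (Fin 3) F) :=
    IsUnit.of_mul_eq_one (MvPolynomial.C (t*e1)⁻¹)
      (by rw [← C_mul, mul_inv_cancel₀ (mul_ne_zero ht he1), C_1])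
  rw [hu.mul_left_dvd]
  apply dvd_of_aeval_eq_zero
  rw [fermatSlice]
  simp only [map_add, map_pow, map_mul, aeval_X, aeval_C, algebraMap_eq,
    Function.update_apply]
  norm_num
  rw [if_neg (show ¬((2:Fin 3) = 1) by decide), if_neg (show ¬((2:Fin 3) = 1) by decide)]
  have key : MvPolynomial.C e0 * X 0 + MvPolynomial.C e1 * (MvPolynomial.C m * X 0) +
      MvPolynomial.C e2 * X 2 = MvPolynomial.C e2 * X (2 : Fin 3) := by
    rw [show MvPolynomial.C e1 * (MvPolynomial.C m * X (0:Fin 3))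
      = MvPolynomial.C (e1*m) * X 0 by rw [C_mul]; ring, hem, map_neg]
    ring
  rw [key, mul_pow, mul_pow, ← C_pow, ← C_pow, hm, h2, map_neg, C_1]
  ring

lemma dvd_case02 (hcardF : Fintype.card F = 2*d+1) (hd0 : d ≠ 0)
    (e0 e1 e2 t : F) (ht : t ≠ 0) (h01 : (-(e0*e2))^d = -1) (h2 : e1^d = -1) :
    (MvPolynomial.C t * (MvPolynomial.C e0 * X 0 + MvPolynomial.C e2 * X 2)) ∣
      fermatSlice F d e0 e1 e2 := by
  have he2 : e2 ≠ 0 := by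
    rintro rfl
    rw [mul_zero, neg_zero, zero_pow hd0] at h01
    exact one_ne_zero (by linear_combination h01)
  obtain ⟨m, hmdef⟩ : ∃ m : F, m = -(e0/e2) := ⟨_, rfl⟩
  have hm : m ^ d = -1 := by rw [hmdef, sq_trick hcardF _ _ he2]; exact h01
  have hem : e2 * m = -e0 := by rw [hmdef]; field_simp
  have hgoal : MvPolynomial.C t * (MvPolynomial.C e0 * X 0 + MvPolynomial.C e2 * X 2)
      = MvPolynomial.C (t*e2) * (X 2 - MvPolynomial.C m * X (0 : Fin 3)) := by
    have hC : (MvPolynomial.C e0 : MvPolynomial (Fin 3) F)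
        = -(MvPolynomial.C e2 * MvPolynomial.C m) := by
      rw [← C_mul, hem, map_neg, neg_neg]
    rw [hC, C_mul]; ring
  rw [hgoal]
  have hu : IsUnit (MvPolynomial.C (t*e2) : MvPolynomial (Fin 3) F) :=
    IsUnit.of_mul_eq_one (MvPolynomial.C (t*e2)⁻¹)
      (by rw [← C_mul, mul_inv_cancel₀ (mul_ne_zero ht he2), C_1])
  rw [hu.mul_left_dvd]
  apply dvd_of_aeval_eq_zero
  rw [fermatSlice]
  simp only [map_add, map_pow, map_mul, aeval_X, aeval_C, algebraMap_eq,
    Function.update_apply]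
  norm_num
  rw [if_neg (show ¬((0:Fin 3) = 2) by decide), if_neg (show ¬((1:Fin 3) = 2) by decide),
    if_neg (show ¬((0:Fin 3) = 2) by decide), if_neg (show ¬((1:Fin 3) = 2) by decide)]
  have key : MvPolynomial.C e0 * X 0 + MvPolynomial.C e1 * X 1 +
      MvPolynomial.C e2 * (MvPolynomial.C m * X 0) = MvPolynomial.C e1 * X (1 : Fin 3) := by
    rw [show MvPolynomial.C e2 * (MvPolynomial.C m * X (0:Fin 3))
      = MvPolynomial.C (e2*m) * X 0 by rw [C_mul]; ring, hem, map_neg]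
    ring
  rw [key, mul_pow, mul_pow, ← C_pow, ← C_pow, hm, h2, map_neg, C_1]
  ring

lemma dvd_case12 (hcardF : Fintype.card F = 2*d+1) (hd0 : d ≠ 0)
    (e0 e1 e2 t : F) (ht : t ≠ 0) (h01 : (-(e1*e2))^d = -1) (h2 : e0^d = -1) :
    (MvPolynomial.C t * (MvPolynomial.C e1 * X 1 + MvPolynomial.C e2 * X 2)) ∣
      fermatSlice F d e0 e1 e2 := by
  have he2 : e2 ≠ 0 := by
    rintro rfl
    rw [mul_zero, neg_zero, zero_pow hd0] at h01
    exact one_ne_zero (by linear_combination h01)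
  obtain ⟨m, hmdef⟩ : ∃ m : F, m = -(e1/e2) := ⟨_, rfl⟩
  have hm : m ^ d = -1 := by rw [hmdef, sq_trick hcardF _ _ he2]; exact h01
  have hem : e2 * m = -e1 := by rw [hmdef]; field_simp
  have hgoal : MvPolynomial.C t * (MvPolynomial.C e1 * X 1 + MvPolynomial.C e2 * X 2)
      = MvPolynomial.C (t*e2) * (X 2 - MvPolynomial.C m * X (1 : Fin 3)) := by
    have hC : (MvPolynomial.C e1 : MvPolynomial (Fin 3) F)
        = -(MvPolynomial.C e2 * MvPolynomial.C m) := by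
      rw [← C_mul, hem, map_neg, neg_neg]
    rw [hC, C_mul]; ring
  rw [hgoal]
  have hu : IsUnit (MvPolynomial.C (t*e2) : MvPolynomial (Fin 3) F) :=
    IsUnit.of_mul_eq_one (MvPolynomial.C (t*e2)⁻¹)
      (by rw [← C_mul, mul_inv_cancel₀ (mul_ne_zero ht he2), C_1])
  rw [hu.mul_left_dvd]
  apply dvd_of_aeval_eq_zero
  rw [fermatSlice]
  simp only [map_add, map_pow, map_mul, aeval_X, aeval_C, algebraMap_eq,
    Function.update_apply]
  norm_num
  rw [if_neg (show ¬((0:Fin 3) = 2) by decide), if_neg (show ¬((1:Fin 3) = 2) by decide),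
    if_neg (show ¬((0:Fin 3) = 2) by decide), if_neg (show ¬((1:Fin 3) = 2) by decide)]
  have key : MvPolynomial.C e0 * X 0 + MvPolynomial.C e1 * X 1 +
      MvPolynomial.C e2 * (MvPolynomial.C m * X 1) = MvPolynomial.C e0 * X (0 : Fin 3) := by
    rw [show MvPolynomial.C e2 * (MvPolynomial.C m * X (1:Fin 3))
      = MvPolynomial.C (e2*m) * X 1 by rw [C_mul]; ring, hem, map_neg]
    ring
  rw [key, mul_pow, mul_pow, ← C_pow, ← C_pow, hm, h2, map_neg, C_1]
  ring

end DvdCases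

set_option maxHeartbeats 2000000 in
/-- Suppose `C` is not a product of `d` linear forms over the algebraic
closure (equivalently, it is not the case that exactly one of `η(e0), η(e1), η(e2)` is `-1`
with the other two `e`'s zero).  Then a nonzero linear form `ℓ` divides `C` if and only if
there are indices `{i,j,k} = {0,1,2}` with `η(-e_i·e_j) = -1` and `η(e_k) = -1` such that
`ℓ` is a nonzero scalar multiple of `e_i·X_i + e_j·X_j`. -/
theorem statement6 (p h : ℕ) (hp : Nat.Prime p) (hp3 : 3 < p) (hh : 0 < h)
    (F : Type) [Field F] [Fintype F] (hcard : Fintype.card F = p ^ h)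
    (d : ℕ) (hd : p ^ h = 2 * d + 1) (e0 e1 e2 : F)
    (hNotLines : ¬ ((e0 ^ d = -1 ∧ e1 = 0 ∧ e2 = 0) ∨ (e1 ^ d = -1 ∧ e0 = 0 ∧ e2 = 0) ∨
      (e2 ^ d = -1 ∧ e0 = 0 ∧ e1 = 0)))
    (ℓ : MvPolynomial (Fin 3) F) (hl0 : ℓ ≠ 0) (hlin : ℓ.IsHomogeneous 1) :
    ℓ ∣ fermatSlice F d e0 e1 e2 ↔
      ∃ i j k : Fin 3, i ≠ j ∧ i ≠ k ∧ j ≠ k ∧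
        (-(![e0, e1, e2] i * ![e0, e1, e2] j)) ^ d = -1 ∧ (![e0, e1, e2] k) ^ d = -1 ∧
        ∃ t : F, t ≠ 0 ∧
          ℓ = MvPolynomial.C t *
            (MvPolynomial.C (![e0, e1, e2] i) * X i +
              MvPolynomial.C (![e0, e1, e2] j) * X j) := by
  have hcardF : Fintype.card F = 2*d+1 := by rw [hcard, hd]
  have hd2 : 2 ≤ d := by
    have hp4 : p ≠ 4 := fun hp4 => by rw [hp4] at hp; norm_num at hp
    have h5 : 5 ≤ p ^ h := le_trans (by omega) (Nat.le_self_pow (by omega) p)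
    omega
  have hd0 : d ≠ 0 := by omega
  obtain ⟨h2F, h3F⟩ := char23 p h hp hp3 hcard
  constructor
  · intro hdvd
    obtain ⟨Q, hQ⟩ := hdvd
    have hdec := lin_decomp ℓ hlin
    set a := coeff (Finsupp.single 0 1) ℓ with ha_def
    set b := coeff (Finsupp.single 1 1) ℓ with hb_def
    set c := coeff (Finsupp.single 2 1) ℓ with hc_def
    have heval : ∀ x y z : F, a*x + b*y + c*z = 0 →
        x^d + y^d + z^d + (e0*x + e1*y + e2*z)^d = 0 := by
      intro x y z hxyz
      have h1 := congrArg (eval ![x,y,z]) hQ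
      rw [map_mul] at h1
      have h2 : eval ![x,y,z] ℓ = 0 := by
        rw [hdec]
        simp only [map_add, map_mul, eval_C, eval_X, Matrix.cons_val_zero, Matrix.cons_val_one,
          Matrix.head_cons, Matrix.cons_val_two, Matrix.tail_cons]
        exact hxyz
      rw [h2, zero_mul, fermatSlice] at h1
      simp only [map_add, map_pow, map_mul, eval_C, eval_X, Matrix.cons_val_zero,
        Matrix.cons_val_one, Matrix.head_cons, Matrix.cons_val_two, Matrix.tail_cons] at h1
      exact h1
    rcases eq_or_ne c 0 with hc | hc
    · rcases eq_or_ne b 0 with hb | hb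
      · -- ℓ = C a * X 0 : impossible
        have E3 := heval 0 1 1 (by rw [hb, hc]; ring)
        rw [zero_pow hd0, one_pow] at E3
        rw [show e0*0 + e1*1 + e2*1 = e1 + e2 by ring] at E3
        exact (no_neg_two h2F h3F hcardF (e1+e2) (by linear_combination E3)).elim
      · -- c = 0, b ≠ 0
        obtain ⟨α, hα⟩ : ∃ α : F, α = -(a/b) := ⟨_, rfl⟩
        have E0 := heval 0 0 1 (by rw [hc]; ring)
        rw [zero_pow hd0, one_pow] at E0
        rw [show e0*0 + e1*0 + e2*1 = e2 by ring] at E0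
        have he2d : e2^d = -1 := by linear_combination E0
        have E1 := heval 1 α 0 (by rw [hα, hc]; field_simp; try ring)
        rw [one_pow, zero_pow hd0] at E1
        rw [show e0*1 + e1*α + e2*0 = e0 + e1*α by ring] at E1
        have E1' : 1 + α^d + (e0 + e1*α)^d = 0 := by linear_combination E1
        rcases solve_one h2F h3F (trich hcardF α) (trich hcardF (e0 + e1*α)) E1' with
          ⟨hA, hG⟩ | ⟨hA, hG⟩
        · have hα0 : α = 0 := (pow_eq_zero_iff hd0).mp hA
          have ha0 : a = 0 := by
            rw [hα0] at hα
            field_simp at hα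
            linear_combination hα
          have E3 := heval 1 0 1 (by rw [ha0, hc]; ring)
          rw [one_pow, zero_pow hd0] at E3
          rw [show e0*1 + e1*0 + e2*1 = e0 + e2 by ring] at E3
          exact (no_neg_two h2F h3F hcardF (e0+e2) (by linear_combination E3)).elim
        · have hG0 : e0 + e1*α = 0 := (pow_eq_zero_iff hd0).mp hG
          rcases eq_or_ne e1 0 with he1 | he1
          · have he0 : e0 = 0 := by rw [he1] at hG0; linear_combination hG0
            exact absurd (Or.inr (Or.inr ⟨he2d, he0, he1⟩)) hNotLines
          · have hα2 : α = -(e0/e1) := by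
              field_simp
              linear_combination hG0
            refine ⟨0, 1, 2, by decide, by decide, by decide, ?_, ?_, b/e1,
              div_ne_zero hb he1, ?_⟩
            · simp only [Matrix.cons_val_zero, Matrix.cons_val_one, Matrix.head_cons]
              rw [← sq_trick hcardF _ _ he1, ← hα2]
              exact hA
            · simp only [Matrix.cons_val_two, Matrix.tail_cons, Matrix.head_cons]
              exact he2d
            · simp only [Matrix.cons_val_zero, Matrix.cons_val_one, Matrix.head_cons]
              have key : MvPolynomial.C (b/e1) * (MvPolynomial.C e0 * X 0 + MvPolynomial.C e1 * X 1)
                  = MvPolynomial.C (b/e1*e0) * X 0 + MvPolynomial.C (b/e1*e1) * X (1:Fin 3) := by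
                rw [C_mul, C_mul]; ring
              have haa : a = b/e1*e0 := by
                have : -(a/b) = -(e0/e1) := by rw [← hα, hα2]
                field_simp at this
                field_simp
                linear_combination -this
              rw [hdec, hc, key, div_mul_cancel₀ b he1, ← haa, C_0, zero_mul, add_zero]
    · -- c ≠ 0
      obtain ⟨α, hα⟩ : ∃ α : F, α = -(a/c) := ⟨_, rfl⟩
      obtain ⟨β, hβ⟩ : ∃ β : F, β = -(b/c) := ⟨_, rfl⟩
      have E1 := heval 1 0 α (by rw [hα]; field_simp; try ring)
      rw [one_pow, zero_pow hd0] at E1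
      rw [show e0*1 + e1*0 + e2*α = e0 + e2*α by ring] at E1
      have E1' : 1 + α^d + (e0 + e2*α)^d = 0 := by linear_combination E1
      have E2 := heval 0 1 β (by rw [hβ]; field_simp; try ring)
      rw [one_pow, zero_pow hd0] at E2
      rw [show e0*0 + e1*1 + e2*β = e1 + e2*β by ring] at E2
      have E2' : 1 + β^d + (e1 + e2*β)^d = 0 := by linear_combination E2
      have E3 := heval 1 1 (α+β) (by rw [hα, hβ]; field_simp; ring)
      rw [one_pow] at E3
      rw [show e0*1 + e1*1 + e2*(α+β) = e0 + e1 + e2*(α+β) by ring] at E3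
      rcases solve_one h2F h3F (trich hcardF α) (trich hcardF (e0 + e2*α)) E1' with
        ⟨hA, hG⟩ | ⟨hA, hG⟩ <;>
        rcases solve_one h2F h3F (trich hcardF β) (trich hcardF (e1 + e2*β)) E2' with
          ⟨hB, hD⟩ | ⟨hB, hD⟩
      · -- α = 0, β = 0 : contradiction
        have hα0 : α = 0 := (pow_eq_zero_iff hd0).mp hA
        have hβ0 : β = 0 := (pow_eq_zero_iff hd0).mp hB
        have hab : α + β = 0 := by rw [hα0, hβ0]; ring
        rw [hab, zero_pow hd0] at E3
        exact (no_neg_two h2F h3F hcardF (e0+e1+e2*0) (by linear_combination E3)).elim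
      · -- α = 0, (e0)^d = -1 ; β^d = -1, e1 + e2 β = 0
        have hα0 : α = 0 := (pow_eq_zero_iff hd0).mp hA
        have hD0 : e1 + e2*β = 0 := (pow_eq_zero_iff hd0).mp hD
        rw [hα0, mul_zero, add_zero] at hG
        have ha0 : a = 0 := by
          rw [hα0] at hα
          field_simp at hα
          linear_combination hα
        rcases eq_or_ne e2 0 with he2 | he2
        · have he1 : e1 = 0 := by rw [he2] at hD0; linear_combination hD0
          exact absurd (Or.inl ⟨hG, he1, he2⟩) hNotLines
        · have hβ2 : β = -(e1/e2) := by
            field_simp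
            linear_combination hD0
          refine ⟨1, 2, 0, by decide, by decide, by decide, ?_, ?_, c/e2,
            div_ne_zero hc he2, ?_⟩
          · simp only [Matrix.cons_val_one, Matrix.head_cons, Matrix.cons_val_two,
              Matrix.tail_cons, Matrix.cons_val_zero]
            rw [← sq_trick hcardF _ _ he2, ← hβ2]
            exact hB
          · simp only [Matrix.cons_val_zero]
            exact hG
          · simp only [Matrix.cons_val_one, Matrix.head_cons, Matrix.cons_val_two,
              Matrix.tail_cons, Matrix.cons_val_zero]
            have key : MvPolynomial.C (c/e2) * (MvPolynomial.C e1 * X 1 + MvPolynomial.C e2 * X 2)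
                = MvPolynomial.C (c/e2*e1) * X 1 + MvPolynomial.C (c/e2*e2) * X (2:Fin 3) := by
              rw [C_mul, C_mul]; ring
            have hbb : b = c/e2*e1 := by
              have : -(b/c) = -(e1/e2) := by rw [← hβ, hβ2]
              field_simp at this
              field_simp
              linear_combination -this
            rw [hdec, ha0, key, div_mul_cancel₀ c he2, ← hbb, C_0, zero_mul, zero_add]
      · -- α^d = -1, e0 + e2 α = 0 ; β = 0, e1^d = -1
        have hβ0 : β = 0 := (pow_eq_zero_iff hd0).mp hB
        have hG0 : e0 + e2*α = 0 := (pow_eq_zero_iff hd0).mp hG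
        rw [hβ0, mul_zero, add_zero] at hD
        have hb0 : b = 0 := by
          rw [hβ0] at hβ
          field_simp at hβ
          linear_combination hβ
        rcases eq_or_ne e2 0 with he2 | he2
        · have he0 : e0 = 0 := by rw [he2] at hG0; linear_combination hG0
          exact absurd (Or.inr (Or.inl ⟨hD, he0, he2⟩)) hNotLines
        · have hα2 : α = -(e0/e2) := by
            field_simp
            linear_combination hG0
          refine ⟨0, 2, 1, by decide, by decide, by decide, ?_, ?_, c/e2,
            div_ne_zero hc he2, ?_⟩
          · simp only [Matrix.cons_val_zero, Matrix.cons_val_two, Matrix.tail_cons,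
              Matrix.head_cons]
            rw [← sq_trick hcardF _ _ he2, ← hα2]
            exact hA
          · simp only [Matrix.cons_val_one, Matrix.head_cons, Matrix.cons_val_zero]
            exact hD
          · simp only [Matrix.cons_val_zero, Matrix.cons_val_two, Matrix.tail_cons,
              Matrix.head_cons]
            have key : MvPolynomial.C (c/e2) * (MvPolynomial.C e0 * X 0 + MvPolynomial.C e2 * X 2)
                = MvPolynomial.C (c/e2*e0) * X 0 + MvPolynomial.C (c/e2*e2) * X (2:Fin 3) := by
              rw [C_mul, C_mul]; ring
            have haa : a = c/e2*e0 := by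
              have : -(a/c) = -(e0/e2) := by rw [← hα, hα2]
              field_simp at this
              field_simp
              linear_combination -this
            rw [hdec, hb0, key, div_mul_cancel₀ c he2, ← haa, C_0, zero_mul, add_zero]
      · -- both second: contradiction
        have hG0 : e0 + e2*α = 0 := (pow_eq_zero_iff hd0).mp hG
        have hD0 : e1 + e2*β = 0 := (pow_eq_zero_iff hd0).mp hD
        have hsum : e0 + e1 + e2*(α+β) = 0 := by linear_combination hG0 + hD0
        rw [hsum, zero_pow hd0] at E3
        exact (no_neg_two h2F h3F hcardF (α+β) (by linear_combination E3)).elim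
  · rintro ⟨i, j, k, hij, hik, hjk, hcond1, hcond2, t, ht, hlt⟩
    fin_cases i <;> fin_cases j <;> fin_cases k <;>
      simp at hcond1 hcond2 hlt <;>
      first
        | (exact absurd (by decide) hij)
        | (exact absurd (by decide) hik)
        | (exact absurd (by decide) hjk)
        | (rw [hlt]
           with_reducible exact dvd_case01 hcardF hd0 e0 e1 e2 t ht hcond1 hcond2)
        | (rw [hlt, add_comm (MvPolynomial.C e1 * X 1) (MvPolynomial.C e0 * X 0)]
           with_reducible exact dvd_case01 hcardF hd0 e0 e1 e2 t ht
                             (by rw [mul_comm e0 e1]; exact hcond1) hcond2)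
        | (rw [hlt]
           with_reducible exact dvd_case02 hcardF hd0 e0 e1 e2 t ht hcond1 hcond2)
        | (rw [hlt, add_comm (MvPolynomial.C e2 * X 2) (MvPolynomial.C e0 * X 0)]
           with_reducible exact dvd_case02 hcardF hd0 e0 e1 e2 t ht
                             (by rw [mul_comm e0 e2]; exact hcond1) hcond2)
        | (rw [hlt]
           with_reducible exact dvd_case12 hcardF hd0 e0 e1 e2 t ht hcond1 hcond2)
        | (rw [hlt, add_comm (MvPolynomial.C e2 * X 2) (MvPolynomial.C e1 * X 1)]
           with_reducible exact dvd_case12 hcardF hd0 e0 e1 e2 t ht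
                             (by rw [mul_comm e1 e2]; exact hcond1) hcond2)
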